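/- For a fixed monomial order, every nonzero ideal I ⊆ k[X_1,...,X_m] has a unique reduced Groebner basis, i.e., a Groebner basis G such that every element of G is monic and, for each p ∈ G, no monomial of p lies in the ideal generated by the leading terms of G \ {p}. -/

import Mathlib

open MvPolynomial

variable {σ K : Type*}

/-- The leading (multidegree) exponent of a polynomial with respect to a monomial order:
the maximum, for the order, of the exponents appearing in `f`. -/
noncomputable def leadExp [Field K] (m : MonomialOrder σ) (f : MvPolynomial σ K) :
    σ →₀ ℕ :=
  m.toSyn.symm (f.support.sup fun d => m.toSyn d)

/-- The leading term of a polynomial with respect to a monomial order. -/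
noncomputable def leadTerm [Field K] (m : MonomialOrder σ) (f : MvPolynomial σ K) :
    MvPolynomial σ K :=
  monomial (leadExp m f) (f.coeff (leadExp m f))

/-- `G` is a Groebner basis of the ideal `I` for the monomial order `m`:
a finite subset of `I` whose leading terms generate the same ideal as the leading
terms of all (nonzero) elements of `I`. -/
def IsGroebnerBasis [Field K] (m : MonomialOrder σ) (I : Ideal (MvPolynomial σ K))
    (G : Set (MvPolynomial σ K)) : Prop :=
  G.Finite ∧ G ⊆ (I : Set (MvPolynomial σ K)) ∧
    Ideal.span (leadTerm m '' G) =
      Ideal.span (leadTerm m '' {f | f ∈ I ∧ f ≠ 0})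

/-- `r` is a remainder of `f` on division by `G` (relative to the ideal `I`):
`f - r ∈ I` and no monomial of `r` is divisible by the leading monomial of any
nonzero element of `G`. -/
def IsRemainder [Field K] (m : MonomialOrder σ) (I : Ideal (MvPolynomial σ K))
    (G : Set (MvPolynomial σ K)) (f r : MvPolynomial σ K) : Prop :=
  f - r ∈ I ∧
    ∀ c ∈ r.support, ∀ g ∈ G, g ≠ 0 → ¬ leadExp m g ≤ c

/-- A Groebner basis is reduced if all its elements are monic and no monomial of an
element `p` lies in the ideal generated by the leading terms of the other elements. -/
def IsReducedGB [Field K] (m : MonomialOrder σ) (G : Set (MvPolynomial σ K)) : Prop :=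
  ∀ p ∈ G, p.coeff (leadExp m p) = 1 ∧
    ∀ c ∈ p.support, (monomial c (1 : K)) ∉ Ideal.span (leadTerm m '' (G \ {p}))

section Aux
variable [Field K] (m : MonomialOrder σ)

lemma toSyn_leadExp (f : MvPolynomial σ K) :
    m.toSyn (leadExp m f) = f.support.sup fun d => m.toSyn d := by
  simp [leadExp]

lemma le_toSyn_leadExp {f : MvPolynomial σ K} {c : σ →₀ ℕ} (hc : c ∈ f.support) :
    m.toSyn c ≤ m.toSyn (leadExp m f) := by
  rw [toSyn_leadExp]; exact Finset.le_sup hc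

lemma leadExp_mem_support {f : MvPolynomial σ K} (hf : f ≠ 0) :
    leadExp m f ∈ f.support := by
  obtain ⟨b, hb, he⟩ := Finset.exists_mem_eq_sup f.support
    (support_nonempty.mpr hf) fun d => m.toSyn d
  have hb' : leadExp m f = b := by
    rw [leadExp, he, m.toSyn.symm_apply_apply]
  rwa [hb']

lemma coeff_leadExp_ne_zero {f : MvPolynomial σ K} (hf : f ≠ 0) :
    f.coeff (leadExp m f) ≠ 0 :=
  mem_support_iff.mp (leadExp_mem_support m hf)

lemma leadExp_eq {f : MvPolynomial σ K} {d : σ →₀ ℕ} (h1 : f.coeff d ≠ 0)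
    (h2 : ∀ c ∈ f.support, m.toSyn c ≤ m.toSyn d) : leadExp m f = d := by
  refine m.toSyn.injective (le_antisymm ?_ (le_toSyn_leadExp m (mem_support_iff.mpr h1)))
  rw [toSyn_leadExp]; exact Finset.sup_le h2

lemma leadExp_monomial {e : σ →₀ ℕ} {a : K} (ha : a ≠ 0) :
    leadExp m (monomial e a) = e := by
  classical
  refine leadExp_eq m (by simp [coeff_monomial, ha]) ?_
  intro c hc
  rw [support_monomial, if_neg ha] at hc
  simp only [Finset.mem_singleton] at hc
  subst hc; exact le_rfl

lemma leadExp_mem_support_leadTerm {f : MvPolynomial σ K} (hf : f ≠ 0) :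
    leadExp m f ∈ (leadTerm m f).support := by
  classical
  rw [leadTerm, mem_support_iff, coeff_monomial, if_pos rfl]
  exact coeff_leadExp_ne_zero m hf

lemma exists_leadExp_le_of_mem_span {T : Set (MvPolynomial σ K)} {f : MvPolynomial σ K}
    (hf : f ∈ Ideal.span (leadTerm m '' T)) :
    ∀ c ∈ f.support, ∃ g ∈ T, g ≠ 0 ∧ leadExp m g ≤ c := by
  classical
  refine Submodule.span_induction ?_ ?_ ?_ ?_ hf
  · rintro x ⟨g, hg, rfl⟩ c hc
    by_cases hg0 : g = 0
    · rw [hg0] at hc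
      simp [leadTerm] at hc
    · refine ⟨g, hg, hg0, ?_⟩
      rw [leadTerm] at hc
      have := support_monomial_subset hc
      simp only [Finset.mem_singleton] at this
      subst this; exact le_rfl
  · simp
  · intro x y hx hy ihx ihy c hc
    rcases Finset.mem_union.mp (support_add hc) with h | h
    exacts [ihx c h, ihy c h]
  · intro a x hx ih c hc
    have hc' : c ∈ (a * x).support := by simpa [smul_eq_mul] using hc
    obtain ⟨d, hd, e, he, rfl⟩ := Finset.mem_add.mp (support_mul a x hc')
    obtain ⟨g, hgT, hg0, hge⟩ := ih e he
    exact ⟨g, hgT, hg0, hge.trans le_add_self⟩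

lemma monomial_mem_span_leadTerm {G : Set (MvPolynomial σ K)} {g : MvPolynomial σ K}
    (hg : g ∈ G) (hg0 : g ≠ 0) {c : σ →₀ ℕ} (hle : leadExp m g ≤ c) :
    (monomial c (1 : K)) ∈ Ideal.span (leadTerm m '' G) := by
  have h : (monomial (c - leadExp m g) ((g.coeff (leadExp m g))⁻¹) : MvPolynomial σ K)
      * leadTerm m g = monomial c 1 := by
    rw [leadTerm, monomial_mul, tsub_add_cancel_of_le hle,
      inv_mul_cancel₀ (coeff_leadExp_ne_zero m hg0)]
  rw [← h]
  exact Ideal.mul_mem_left _ _ (Ideal.subset_span ⟨g, hg, rfl⟩)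

end Aux

section Div
variable [Field K] (m : MonomialOrder σ)

lemma exists_remainder' (G : Set (MvPolynomial σ K)) (f : MvPolynomial σ K) :
    ∃ r : MvPolynomial σ K, f - r ∈ Ideal.span G ∧
      (∀ c ∈ r.support, ∀ g ∈ G, g ≠ 0 → ¬ leadExp m g ≤ c) ∧
      ∀ c ∈ r.support, m.toSyn c ≤ m.toSyn (leadExp m f) := by
  classical
  set μ : MvPolynomial σ K → WithBot m.syn := fun p =>
    (p.support.filter fun c => ∃ g ∈ G, g ≠ 0 ∧ leadExp m g ≤ c).sup
      fun c => ((m.toSyn c : m.syn) : WithBot m.syn) with hμ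
  generalize ha : μ f = a
  induction a using WellFoundedLT.induction generalizing f with
  | _ a ih =>
  subst ha
  by_cases hoff : (f.support.filter fun c => ∃ g ∈ G, g ≠ 0 ∧ leadExp m g ≤ c) = ∅
  · refine ⟨f, by simp, ?_, fun c hc => le_toSyn_leadExp m hc⟩
    intro c hc g hg hg0 hle
    exact Finset.notMem_empty c (hoff ▸ Finset.mem_filter.mpr ⟨hc, g, hg, hg0, hle⟩)
  · -- pick the largest offending monomial
    obtain ⟨c, hc, hcsup⟩ := Finset.exists_mem_eq_sup _
      (Finset.nonempty_of_ne_empty hoff) fun c => m.toSyn c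
    obtain ⟨hcf, g, hg, hg0, hle⟩ := Finset.mem_filter.mp hc
    set q : MvPolynomial σ K :=
      monomial (c - leadExp m g) (f.coeff c / g.coeff (leadExp m g)) with hq
    set f' := f - q * g with hf'
    -- support of q * g is bounded by c
    have hqg : ∀ c' ∈ (q * g).support, m.toSyn c' ≤ m.toSyn c := by
      intro c' hc'
      obtain ⟨d, hd, e, he, rfl⟩ := Finset.mem_add.mp (support_mul q g hc')
      have hd' : d = c - leadExp m g := by
        have := support_monomial_subset hd
        simpa using this
      subst hd'
      have h1 : m.toSyn e ≤ m.toSyn (leadExp m g) := le_toSyn_leadExp m he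
      calc m.toSyn (c - leadExp m g + e) ≤ m.toSyn (c - leadExp m g + leadExp m g) := by
            rw [map_add, map_add]; exact add_le_add le_rfl h1
        _ = m.toSyn c := by rw [tsub_add_cancel_of_le hle]
    -- the coefficient at c of f' vanishes
    have hcoeffc : f'.coeff c = 0 := by
      rw [hf', coeff_sub, hq, coeff_monomial_mul', if_pos tsub_le_self,
        tsub_tsub_cancel_of_le hle,
        div_mul_cancel₀ _ (coeff_leadExp_ne_zero m hg0), sub_self]
    -- support of f' bounded by leadExp f
    have hsupf' : ∀ c' ∈ f'.support, m.toSyn c' ≤ m.toSyn (leadExp m f) := by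
      intro c' hc'
      rcases Finset.mem_union.mp (support_sub σ f (q * g) hc') with h | h
      · exact le_toSyn_leadExp m h
      · exact (hqg c' h).trans (le_toSyn_leadExp m hcf)
    -- the measure decreases
    have hdec : μ f' < μ f := by
      have hlt : ∀ c' ∈ f'.support.filter fun c => ∃ g ∈ G, g ≠ 0 ∧ leadExp m g ≤ c,
          ((m.toSyn c' : m.syn) : WithBot m.syn) < ((m.toSyn c : m.syn) : WithBot m.syn) := by
        intro c' hc'
        obtain ⟨hc'f, hc'off⟩ := Finset.mem_filter.mp hc'
        have hne : c' ≠ c := fun h => (mem_support_iff.mp hc'f) (h ▸ hcoeffc)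
        have hle' : m.toSyn c' ≤ m.toSyn c := by
          rcases Finset.mem_union.mp (support_sub σ f (q * g) hc'f) with h | h
          · exact hcsup ▸ Finset.le_sup (Finset.mem_filter.mpr ⟨h, hc'off⟩)
          · exact hqg c' h
        exact_mod_cast lt_of_le_of_ne hle' (fun h => hne (m.toSyn.injective (by exact_mod_cast h)))
      have h1 : μ f' < ((m.toSyn c : m.syn) : WithBot m.syn) := by
        rw [hμ]
        exact Finset.sup_lt_iff (by exact bot_lt_iff_ne_bot.mpr (by simp)) |>.mpr hlt
      refine h1.trans_le ?_
      exact Finset.le_sup (f := fun c => ((m.toSyn c : m.syn) : WithBot m.syn)) hc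
    obtain ⟨r, hr1, hr2, hr3⟩ := ih (μ f') hdec f' rfl
    refine ⟨r, ?_, hr2, ?_⟩
    · have : f - r = q * g + (f' - r) := by rw [hf']; ring
      rw [this]
      exact Ideal.add_mem _ (Ideal.mul_mem_left _ _ (Ideal.subset_span hg)) hr1
    · intro c' hc'
      refine (hr3 c' hc').trans ?_
      conv_lhs => rw [toSyn_leadExp]
      exact Finset.sup_le hsupf'
end Div

section Main
variable [Field K] (m : MonomialOrder σ) {I : Ideal (MvPolynomial σ K)}

lemma groebner_exists_leadExp_le {G : Set (MvPolynomial σ K)} (hG : IsGroebnerBasis m I G)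
    {f : MvPolynomial σ K} (hf : f ∈ I) (hf0 : f ≠ 0) :
    ∃ g ∈ G, g ≠ 0 ∧ leadExp m g ≤ leadExp m f := by
  have hmem : leadTerm m f ∈ Ideal.span (leadTerm m '' G) := by
    rw [hG.2.2]; exact Ideal.subset_span ⟨f, ⟨hf, hf0⟩, rfl⟩
  exact exists_leadExp_le_of_mem_span m hmem _ (leadExp_mem_support_leadTerm m hf0)

lemma reducedGB_subset {G1 G2 : Set (MvPolynomial σ K)}
    (h1 : IsGroebnerBasis m I G1) (r1 : IsReducedGB m G1)
    (h2 : IsGroebnerBasis m I G2) (r2 : IsReducedGB m G2) : G1 ⊆ G2 := by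
  intro p hp
  obtain ⟨hpc, hpred⟩ := r1 p hp
  have hp0 : p ≠ 0 := fun h => by simp [h] at hpc
  have hpI : p ∈ I := h1.2.1 hp
  set e := leadExp m p with he
  have hesupp : e ∈ p.support := mem_support_iff.mpr (by rw [hpc]; exact one_ne_zero)
  have key1 : ∀ c ∈ p.support, ∀ g ∈ G1, g ≠ 0 → leadExp m g ≤ c → g = p := by
    intro c hc g hg hg0 hle
    by_contra hne
    exact hpred c hc
      (monomial_mem_span_leadTerm m (Set.mem_diff_of_mem hg (by simpa using hne)) hg0 hle)
  obtain ⟨q, hqG, hq0, hqle⟩ := groebner_exists_leadExp_le m h2 hpI hp0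
  obtain ⟨g, hgG, hg0, hgle⟩ := groebner_exists_leadExp_le m h1 (h2.2.1 hqG) hq0
  have hgp : g = p := key1 e hesupp g hgG hg0 (hgle.trans hqle)
  have heq : leadExp m q = e := le_antisymm hqle (by rw [he, ← hgp]; exact hgle)
  obtain ⟨hqc, hqred⟩ := r2 q hqG
  rw [heq] at hqc
  have key2 : ∀ c ∈ q.support, ∀ g ∈ G2, g ≠ 0 → leadExp m g ≤ c → g = q := by
    intro c hc g hg hg0 hle
    by_contra hne
    exact hqred c hc
      (monomial_mem_span_leadTerm m (Set.mem_diff_of_mem hg (by simpa using hne)) hg0 hle)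
  suffices hpq : p = q by rw [hpq]; exact hqG
  by_contra hpq
  have hd0 : p - q ≠ 0 := sub_ne_zero_of_ne hpq
  have hdI : p - q ∈ I := Ideal.sub_mem _ hpI (h2.2.1 hqG)
  set d := leadExp m (p - q) with hd
  have hdsupp : d ∈ (p - q).support := leadExp_mem_support m hd0
  have hcoeffe : (p - q).coeff e = 0 := by rw [coeff_sub, hpc, hqc, sub_self]
  have hde : d ≠ e := fun h => (mem_support_iff.mp hdsupp) (h ▸ hcoeffe)
  have hdlt : m.toSyn d < m.toSyn e := by
    classical
    have hboth : ∀ c ∈ (p - q).support, m.toSyn c ≤ m.toSyn e := by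
      intro c hc
      rcases Finset.mem_union.mp (support_sub σ p q hc) with h | h
      · exact le_toSyn_leadExp m h
      · exact (le_toSyn_leadExp m h).trans (le_of_eq (congrArg _ heq))
    exact lt_of_le_of_ne (hboth d hdsupp) fun h => hde (m.toSyn.injective h)
  classical
  rcases Finset.mem_union.mp (support_sub σ p q hdsupp) with h | h
  · obtain ⟨g, hgG1, hg0', hgle'⟩ := groebner_exists_leadExp_le m h1 hdI hd0
    have hgp' : g = p := key1 d h g hgG1 hg0' hgle'
    have : m.toSyn e ≤ m.toSyn d := m.toSyn_monotone (by rw [he, ← hgp', hd]; exact hgle')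
    exact absurd this (not_le_of_gt hdlt)
  · obtain ⟨g, hgG2, hg20, hg2le⟩ := groebner_exists_leadExp_le m h2 hdI hd0
    have hgq : g = q := key2 d h g hgG2 hg20 hg2le
    have : m.toSyn e ≤ m.toSyn d := m.toSyn_monotone (by
      rw [← heq, ← hgq, hd]; exact hg2le)
    exact absurd this (not_le_of_gt hdlt)

lemma exists_finite_subset_span_eq {R M : Type*} [CommRing R] [AddCommGroup M] [Module R M]
    {T : Set M} (hfg : (Submodule.span R T).FG) :
    ∃ S : Set M, S.Finite ∧ S ⊆ T ∧ Submodule.span R S = Submodule.span R T := by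
  classical
  obtain ⟨s, hs⟩ := hfg
  have hmem : ∀ x : M, ∃ F : Finset M,
      x ∈ (s : Set M) → ↑F ⊆ T ∧ x ∈ Submodule.span R (F : Set M) := by
    intro x
    by_cases hx : x ∈ (s : Set M)
    · have hxT : x ∈ Submodule.span R T := hs ▸ Submodule.subset_span hx
      obtain ⟨F, h1, h2⟩ := Submodule.mem_span_finite_of_mem_span hxT
      exact ⟨F, fun _ => ⟨h1, h2⟩⟩
    · exact ⟨∅, fun h => absurd h hx⟩
  choose F hF using hmem
  refine ⟨⋃ x ∈ (s : Set M), ↑(F x), ?_, ?_, ?_⟩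
  · exact Set.Finite.biUnion s.finite_toSet fun x _ => (F x).finite_toSet
  · exact Set.iUnion₂_subset fun x hx => (hF x hx).1
  · refine le_antisymm (Submodule.span_le.mpr ?_) ?_
    · exact Set.iUnion₂_subset fun x hx => ((hF x hx).1).trans Submodule.subset_span
    · rw [← hs]
      refine Submodule.span_le.mpr fun x hx => ?_
      exact Submodule.span_mono (Set.subset_iUnion₂ x hx) (hF x hx).2

end Main

section Exist
variable [Field K] (m : MonomialOrder σ)

set_option maxHeartbeats 1000000 in
lemma exists_reducedGB [IsNoetherianRing (MvPolynomial σ K)]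
    (I : Ideal (MvPolynomial σ K)) :
    ∃ G, IsGroebnerBasis m I G ∧ IsReducedGB m G := by
  classical
  -- Step 1: a finite Groebner basis `G0` consisting of nonzero elements of `I`
  obtain ⟨S, hSfin, hSsub, hSspan⟩ := exists_finite_subset_span_eq
    (R := MvPolynomial σ K) (T := leadTerm m '' {f | f ∈ I ∧ f ≠ 0})
    (IsNoetherian.noetherian (Ideal.span (leadTerm m '' {f | f ∈ I ∧ f ≠ 0})))
  have hch : ∀ x : S, ∃ f, (f ∈ I ∧ f ≠ 0) ∧ leadTerm m f = (x : MvPolynomial σ K) :=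
    fun x => hSsub x.2
  choose φ hφ using hch
  haveI : Finite S := hSfin
  set G0 : Set (MvPolynomial σ K) := Set.range φ with hG0def
  have hG0fin : G0.Finite := Set.finite_range φ
  have hG0I : G0 ⊆ (I : Set (MvPolynomial σ K)) := by
    rintro _ ⟨x, rfl⟩; exact (hφ x).1.1
  have hG0ne : ∀ g ∈ G0, g ≠ 0 := by
    rintro _ ⟨x, rfl⟩; exact (hφ x).1.2
  have hltG0 : leadTerm m '' G0 = S := by
    rw [hG0def, ← Set.range_comp]
    have : (leadTerm m ∘ φ) = fun x : S => (x : MvPolynomial σ K) := by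
      funext x; exact (hφ x).2
    rw [this, Subtype.range_coe]
  have hG0 : IsGroebnerBasis m I G0 := ⟨hG0fin, hG0I, by rw [hltG0]; exact hSspan⟩
  -- Step 2: minimal lead exponents
  set F : Set (σ →₀ ℕ) := leadExp m '' G0 with hFdef
  have hFfin : F.Finite := hG0fin.image _
  set Fmin : Set (σ →₀ ℕ) := {e ∈ F | ∀ e' ∈ F, e' ≤ e → e' = e} with hFmin
  have hFminfin : Fmin.Finite := hFfin.subset fun e he => he.1
  have hcover : ∀ e ∈ F, ∃ e0 ∈ Fmin, e0 ≤ e := by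
    intro e he
    obtain ⟨a, ⟨haF, hale⟩, hmin⟩ := Set.Finite.exists_minimal (s := {e' ∈ F | e' ≤ e})
      (hFfin.subset fun x hx => hx.1) ⟨e, he, le_rfl⟩
    exact ⟨a, ⟨haF, fun e' he' hle => le_antisymm hle (hmin ⟨he', hle.trans hale⟩ hle)⟩, hale⟩
  have hdivF : ∀ f, f ∈ I → f ≠ 0 → ∃ e0 ∈ Fmin, e0 ≤ leadExp m f := by
    intro f hf hf0
    obtain ⟨g, hg, hg0, hle⟩ := groebner_exists_leadExp_le m hG0 hf hf0
    obtain ⟨e0, he0, hle0⟩ := hcover (leadExp m g) (Set.mem_image_of_mem _ hg)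
    exact ⟨e0, he0, hle0.trans hle⟩
  -- Step 3: reduced elements
  choose r hr1 hr2 hr3 using fun e : σ →₀ ℕ => exists_remainder' m G0 (monomial e (1 : K))
  set p : (σ →₀ ℕ) → MvPolynomial σ K := fun e => monomial e 1 - r e with hpdef
  have hrnot : ∀ e ∈ F, e ∉ (r e).support := by
    rintro e ⟨g, hg, rfl⟩ hmem
    exact hr2 _ _ hmem g hg (hG0ne g hg) le_rfl
  have hcoeffe : ∀ e ∈ F, (p e).coeff e = 1 := by
    intro e he
    rw [hpdef]
    simp [coeff_sub, coeff_monomial, notMem_support_iff.mp (hrnot e he)]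
  have hpsupp : ∀ e, ∀ c ∈ (p e).support, m.toSyn c ≤ m.toSyn e := by
    intro e c hc
    rcases Finset.mem_union.mp (support_sub σ _ _ hc) with h | h
    · have := support_monomial_subset h
      simp only [Finset.mem_singleton] at this
      exact le_of_eq (congrArg _ this)
    · exact (hr3 e c h).trans (le_of_eq (congrArg _ (leadExp_monomial m one_ne_zero)))
  have hpne : ∀ e ∈ F, p e ≠ 0 := by
    intro e he h0
    have := hcoeffe e he
    rw [h0] at this
    simp at this
  have hplead : ∀ e ∈ F, leadExp m (p e) = e := by
    intro e he
    exact leadExp_eq m (by rw [hcoeffe e he]; exact one_ne_zero) (hpsupp e)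
  have hplt : ∀ e ∈ F, leadTerm m (p e) = monomial e 1 := by
    intro e he
    rw [leadTerm, hplead e he, hcoeffe e he]
  have hpI : ∀ e, p e ∈ I := by
    intro e
    exact (Ideal.span_le.mpr hG0I) (hr1 e)
  have htail : ∀ e, ∀ c ∈ (p e).support, c ≠ e → c ∈ (r e).support := by
    intro e c hc hne
    rw [mem_support_iff] at hc ⊢
    intro h0
    apply hc
    rw [hpdef]
    simp only [coeff_sub, coeff_monomial, if_neg (Ne.symm hne), h0, sub_zero, zero_sub, neg_zero]
  -- Step 4: the reduced Groebner basis
  have hFminF : Fmin ⊆ F := fun e he => he.1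
  have hFim : ∀ e ∈ F, ∃ g ∈ G0, leadExp m g = e := by
    rintro e ⟨g, hg, rfl⟩; exact ⟨g, hg, rfl⟩
  have hFminmin : ∀ e ∈ Fmin, ∀ e' ∈ F, e' ≤ e → e' = e := fun e he => he.2
  clear_value p Fmin F G0
  refine ⟨p '' Fmin, ⟨hFminfin.image p, ?_, ?_⟩, ?_⟩
  · rintro _ ⟨e, he, rfl⟩; exact hpI e
  · refine le_antisymm (Ideal.span_le.mpr ?_) (Ideal.span_le.mpr ?_)
    · rintro _ ⟨_, ⟨e, he, rfl⟩, rfl⟩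
      exact Ideal.subset_span ⟨p e, ⟨hpI e, hpne e (hFminF he)⟩, rfl⟩
    · rintro _ ⟨f, ⟨hfI, hf0⟩, rfl⟩
      obtain ⟨e0, he0, hle0⟩ := hdivF f hfI hf0
      have h1 : (monomial (leadExp m f) (1 : K)) ∈ Ideal.span (leadTerm m '' (p '' Fmin)) := by
        refine monomial_mem_span_leadTerm m (Set.mem_image_of_mem _ he0)
          (hpne e0 (hFminF he0)) ?_
        rw [hplead e0 (hFminF he0)]; exact hle0
      have h2 : leadTerm m f = C (f.coeff (leadExp m f)) * monomial (leadExp m f) (1 : K) := by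
        rw [C_mul_monomial, mul_one, leadTerm]
      rw [h2]
      exact SetLike.mem_coe.mpr (Ideal.mul_mem_left _ _ h1)
  · rintro _ ⟨e, he, rfl⟩
    refine ⟨by rw [hplead e (hFminF he)]; exact hcoeffe e (hFminF he), ?_⟩
    intro c hc hmem
    obtain ⟨g, hgmem, hg0, hgle⟩ := exists_leadExp_le_of_mem_span m hmem c (by
      rw [mem_support_iff, coeff_monomial, if_pos rfl]; exact one_ne_zero)
    obtain ⟨⟨e', he', rfl⟩, hgne⟩ := hgmem
    have hne' : e' ≠ e := fun h => by
      apply hgne; rw [h]; rfl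
    rw [hplead e' (hFminF he')] at hgle
    by_cases hce : c = e
    · exact hne' (hFminmin e he e' (hFminF he') (hce ▸ hgle))
    · have hcr : c ∈ (r e).support := htail e c hc hce
      obtain ⟨g0, hg0', hg0e⟩ := hFim e' (hFminF he')
      exact hr2 e c hcr g0 hg0' (hG0ne g0 hg0') (by rw [hg0e]; exact hgle)
end Exist


/-- for a fixed monomial order, every nonzero ideal has a unique
reduced Groebner basis. -/
theorem reduced_groebner_basis_unique [Field K] {n : ℕ} (m : MonomialOrder (Fin n))
    (I : Ideal (MvPolynomial (Fin n) K)) (hI : I ≠ ⊥) :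
    ∃! G : Set (MvPolynomial (Fin n) K), IsGroebnerBasis m I G ∧ IsReducedGB m G := by
  obtain ⟨G, hG1, hG2⟩ := exists_reducedGB m I
  refine ⟨G, ⟨hG1, hG2⟩, ?_⟩
  rintro G' ⟨hG1', hG2'⟩
  exact Set.Subset.antisymm (reducedGB_subset m hG1' hG2' hG1 hG2)
    (reducedGB_subset m hG1 hG2 hG1' hG2')
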